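/- Let A be a commutative Noetherian semi-local ring (finitely many maximal ideals) such that depth(A_m) ≤ 1 for every maximal ideal m of A. Let I be a reflexive ideal of A containing a nonzerodivisor of A such that (I : I) = A. Then I ≅ A as A-modules. -/

import Mathlib

set_option maxHeartbeats 1000000
set_option synthInstance.maxHeartbeats 400000

open CategoryTheory

universe u

/-- The `i`-th Ext module `Ext_A^i(M, N)` over a commutative ring `A`. -/
noncomputable def ExtModule (A : Type u) [CommRing A] (M N : Type u)
    [AddCommGroup M] [Module A M] [AddCommGroup N] [Module A N] (i : ℕ) : ModuleCat.{u} A :=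
  ((Ext A (ModuleCat.{u} A) i).obj (Opposite.op (ModuleCat.of A M))).obj (ModuleCat.of A N)

/-- A module is torsion-free if nonzerodivisors of the ring act injectively. -/
def IsTorsionFreeModule (A : Type*) [CommRing A] (M : Type*) [AddCommGroup M]
    [Module A M] : Prop :=
  ∀ a ∈ nonZeroDivisors A, ∀ m : M, a • m = 0 → m = 0

/-- The grade of an ideal `J`: the length of a maximal regular sequence contained in `J`. -/
noncomputable def Ideal.grade {A : Type*} [CommRing A] (J : Ideal A) : ℕ∞ :=
  sSup {n : ℕ∞ | ∃ rs : List A, (rs.length : ℕ∞) = n ∧ (∀ r ∈ rs, r ∈ J) ∧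
    RingTheory.Sequence.IsWeaklyRegular A rs}

/-- A Cohen–Macaulay local ring: Noetherian local with depth equal to Krull dimension. -/
def IsCohenMacaulayLocalRing (A : Type*) [CommRing A] : Prop :=
  IsNoetherianRing A ∧ ∃ _ : IsLocalRing A,
    ((IsLocalRing.maximalIdeal A).grade : WithBot ℕ∞) = ringKrullDim A

/-- A Cohen–Macaulay ring: Noetherian, all localizations at primes are CM local rings. -/
def IsCohenMacaulayRing (A : Type*) [CommRing A] : Prop :=
  IsNoetherianRing A ∧ ∀ (p : Ideal A) [p.IsPrime],
    IsCohenMacaulayLocalRing (Localization.AtPrime p)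

/-- A Gorenstein local ring: Noetherian local of finite self-injective dimension,
expressed via vanishing of `Ext^{n+1}(A/I, A)` for all ideals `I` (Baer's criterion). -/
def IsGorensteinLocalRing (A : Type u) [CommRing A] : Prop :=
  IsLocalRing A ∧ IsNoetherianRing A ∧
    ∃ n : ℕ, ∀ I : Ideal A, Subsingleton (ExtModule A (A ⧸ I) A (n + 1))

/-- A Gorenstein ring: Noetherian, all localizations at maximal ideals are Gorenstein local. -/
def IsGorensteinRing (A : Type u) [CommRing A] : Prop :=
  IsNoetherianRing A ∧ ∀ (m : Ideal A) [m.IsMaximal],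
    IsGorensteinLocalRing (Localization.AtPrime m)

/-- Generically Gorenstein: the localization at every associated prime is Gorenstein. -/
def IsGenericallyGorenstein (A : Type u) [CommRing A] : Prop :=
  ∀ (p : Ideal A) [p.IsPrime], p ∈ associatedPrimes A A →
    IsGorensteinLocalRing (Localization.AtPrime p)

/-- The trace ideal of a module: the sum of the images of all linear maps to the ring. -/
def traceIdeal (A : Type*) [CommRing A] (M : Type*) [AddCommGroup M] [Module A M] :
    Ideal A :=
  ⨆ f : M →ₗ[A] A, LinearMap.range f

/-- The image of an ideal inside the total ring of fractions. -/
noncomputable def Ideal.toFrac {A : Type u} [CommRing A] (I : Ideal A) :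
    Submodule A (FractionRing A) :=
  Submodule.map (Algebra.linearMap A (FractionRing A)) I

/-- The conductor `(R : S)` of a birational extension `R ⊆ S ⊆ Q(R)`,
as a submodule of the total ring of fractions. -/
noncomputable def conductorFrac (R : Type u) [CommRing R]
    (S : Subalgebra R (FractionRing R)) : Submodule R (FractionRing R) :=
  (1 : Submodule R (FractionRing R)) / Subalgebra.toSubmodule S

/-- `M ∈ Ω CM(A)`: there is an exact sequence `0 → M → P → N → 0` with `P` a finitely
generated projective `A`-module and `N` a finitely generated torsion-free
(equivalently, over a 1-dimensional CM ring, maximal Cohen–Macaulay) `A`-module. -/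
def InSyzygyOfCM (A : Type u) [CommRing A] (M : Type u) [AddCommGroup M] [Module A M] :
    Prop :=
  ∃ (P N : Type u) (_ : AddCommGroup P) (_ : Module A P) (_ : AddCommGroup N)
    (_ : Module A N), Module.Projective A P ∧ Module.Finite A P ∧ Module.Finite A N ∧
      IsTorsionFreeModule A N ∧
      ∃ (f : M →ₗ[A] P) (g : P →ₗ[A] N),
        Function.Injective f ∧ Function.Surjective g ∧ LinearMap.range f = LinearMap.ker g


/-! ### Auxiliary lemmas for Statement 5 -/

open Pointwise RingTheory.Sequence in
lemma socle_exists (R : Type u) [CommRing R] [IsNoetherianRing R] [IsLocalRing R]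
    (α : R) (hα : α ∈ nonZeroDivisors R) (hαm : α ∈ IsLocalRing.maximalIdeal R)
    (hgrade : (IsLocalRing.maximalIdeal R).grade ≤ 1) :
    ∃ y : R, y ∉ Ideal.span {α} ∧ ∀ b ∈ IsLocalRing.maximalIdeal R, b * y ∈ Ideal.span {α} := by
  classical
  set m := IsLocalRing.maximalIdeal R with hm
  have hNspan : α • (⊤ : Submodule R R) = (Ideal.span {α} : Ideal R) := by
    rw [← Submodule.ideal_span_singleton_smul, Ideal.smul_eq_mul, Ideal.mul_top]
  -- every element of m is a zerodivisor mod α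
  have hzd : ∀ b ∈ m, ∃ x : R, b * x ∈ Ideal.span {α} ∧ x ∉ Ideal.span {α} := by
    intro b hb
    have hreg : ¬ IsSMulRegular (R ⧸ (α • (⊤ : Submodule R R))) b := by
      intro hreg
      have hwr : IsWeaklyRegular R [α, b] := by
        rw [isWeaklyRegular_cons_iff]
        refine ⟨?_, ?_⟩
        · rw [isSMulRegular_iff_right_eq_zero_of_smul]
          intro x hx
          rw [smul_eq_mul, mul_comm] at hx
          exact (mem_nonZeroDivisors_iff_right.mp hα) x hx
        · rw [isWeaklyRegular_cons_iff]
          exact ⟨hreg, .nil R _⟩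
      have h2 : (2 : ℕ∞) ∈ {n : ℕ∞ | ∃ rs : List R, (rs.length : ℕ∞) = n ∧ (∀ r ∈ rs, r ∈ m) ∧
          IsWeaklyRegular R rs} := by
        refine ⟨[α, b], by norm_num, ?_, hwr⟩
        intro r hr
        rcases List.mem_pair.mp hr with rfl | rfl
        · exact hαm
        · exact hb
      have hle := le_sSup h2
      rw [← Ideal.grade] at hle
      have h21 : (2 : ℕ∞) ≤ 1 := le_trans hle hgrade
      norm_num at h21
    rw [hNspan, isSMulRegular_quotient_iff_mem_of_smul_mem] at hreg
    push_neg at hreg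
    obtain ⟨x, hx1, hx2⟩ := hreg
    exact ⟨x, by rwa [smul_eq_mul] at hx1, hx2⟩
  -- Lasker decomposition of (α)
  obtain ⟨t, htinf, htprim, -, htmin⟩ := Ideal.IsLasker.minimal (Ideal.isLasker R R) (Ideal.span {α})
  -- m is contained in the union of the radicals
  have hcover : (m : Set R) ⊆ ⋃ Q ∈ (t : Set (Ideal R)), ((Q.radical : Ideal R) : Set R) := by
    intro b hb
    obtain ⟨x, hbx, hx⟩ := hzd b hb
    have hxnot : ∃ Q ∈ t, x ∉ Q := by
      by_contra h; push_neg at h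
      exact hx (htinf ▸ (Submodule.mem_finsetInf).mpr fun i hi => h i hi)
    obtain ⟨Q, hQt, hxQ⟩ := hxnot
    have hbxQ : x * b ∈ Q := by
      have hle : Ideal.span {α} ≤ Q := htinf ▸ Finset.inf_le hQt
      rw [mul_comm]; exact hle hbx
    rcases ((Ideal.isPrimary_iff).mp (htprim hQt)).2 hbxQ with h | h
    · exact absurd h hxQ
    · exact Set.mem_biUnion hQt h
  obtain ⟨Q, hQt, hmQ⟩ := (Ideal.subset_union_prime (R := R) (s := t) (f := Ideal.radical) ⊤ ⊤
      (fun Q hQ _ _ => Ideal.isPrime_radical (htprim hQ))).mp hcover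
  have hQrad : Ideal.radical Q = m := by
    refine ((IsLocalRing.maximalIdeal.isMaximal R).eq_of_le ?_ hmQ).symm
    exact (Ideal.isPrime_radical (htprim hQt)).ne_top
  set D := (t.erase Q).inf id with hD
  have hDQ : ¬ D ≤ Q := htmin hQt
  have hQD : Q ⊓ D = Ideal.span {α} := by
    rw [← htinf, ← Finset.insert_erase hQt, Finset.inf_insert]; rfl
  obtain ⟨k, hk⟩ := Ideal.exists_radical_pow_le_of_fg Q (IsNoetherian.noetherian _)
  have hex : ∃ nn : ℕ, m ^ nn * D ≤ Ideal.span {α} := by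
    refine ⟨k, ?_⟩
    rw [← hQD]
    refine le_inf (le_trans Ideal.mul_le_left ?_) (le_trans Ideal.mul_le_right le_rfl)
    rw [← hQrad]; exact hk
  set n := Nat.find hex with hndef
  have hn : m ^ n * D ≤ Ideal.span {α} := Nat.find_spec hex
  have hn0 : n ≠ 0 := by
    intro h
    rw [h, pow_zero, one_mul] at hn
    exact hDQ (le_trans hn (hQD ▸ inf_le_left))
  have hlt : ¬ (m ^ (n-1) * D ≤ Ideal.span {α}) := Nat.find_min hex (by omega)
  obtain ⟨y, hy1, hy2⟩ := SetLike.not_le_iff_exists.mp hlt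
  refine ⟨y, hy2, fun b hb => ?_⟩
  refine hn ?_
  have heq : m * (m ^ (n-1) * D) = m ^ n * D := by
    have h1 : n - 1 + 1 = n := by omega
    rw [← mul_assoc, ← pow_succ', h1]
  rw [← heq]
  exact Ideal.mul_mem_mul hb hy1

lemma frac_socle_exists (A : Type u) [CommRing A] [IsNoetherianRing A]
    (m : Ideal A) [hm : m.IsMaximal]
    (hgrade : (IsLocalRing.maximalIdeal (Localization.AtPrime m)).grade ≤ 1)
    (a0 : A) (ha0m : a0 ∈ m) (ha0 : a0 ∈ nonZeroDivisors A) :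
    ∃ x : FractionRing A, x ∉ (1 : Submodule A (FractionRing A)) ∧
      ∀ c ∈ m, x * algebraMap A (FractionRing A) c ∈ (1 : Submodule A (FractionRing A)) := by
  classical
  set K := FractionRing A
  set ι := algebraMap A K with hι
  set R := Localization.AtPrime m with hR
  letI : IsNoetherianRing R := IsLocalization.isNoetherianRing m.primeCompl R ‹IsNoetherianRing A›
  set ι' := algebraMap A R with hι'
  set α := ι' a0 with hαdef
  have hαreg : α ∈ nonZeroDivisors R := by
    rw [mem_nonZeroDivisors_iff_right]
    intro z hz
    obtain ⟨⟨r, s⟩, hrs⟩ := IsLocalization.mk'_surjective m.primeCompl z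
    dsimp only at hrs; subst hrs
    have h1 : IsLocalization.mk' R r s * α = IsLocalization.mk' R (r * a0) s := by
      rw [hαdef, ← IsLocalization.mk'_one (M := m.primeCompl) R a0,
        ← IsLocalization.mk'_mul, mul_one]
    rw [h1, IsLocalization.mk'_eq_zero_iff] at hz
    obtain ⟨u, hu⟩ := hz
    rw [IsLocalization.mk'_eq_zero_iff]
    refine ⟨u, (mem_nonZeroDivisors_iff_right.mp ha0) _ ?_⟩
    linear_combination hu
  have hcomap : Ideal.comap ι' (IsLocalRing.maximalIdeal R) = m :=
    Localization.AtPrime.comap_maximalIdeal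
  have hmem_max : ∀ c ∈ m, ι' c ∈ IsLocalRing.maximalIdeal R := by
    intro c hc
    rw [← hcomap] at hc
    exact hc
  have hαm : α ∈ IsLocalRing.maximalIdeal R := hmem_max a0 ha0m
  obtain ⟨y, hy, hsoc⟩ := socle_exists R α hαreg hαm hgrade
  obtain ⟨⟨y0, s0⟩, hy0⟩ := IsLocalization.mk'_surjective m.primeCompl y
  dsimp only at hy0
  -- pointwise clearing of denominators
  have hone : ∀ g ∈ m, ∃ V ∈ m.primeCompl, ∃ e : A, V * (y0 * g) = a0 * e := by
    intro g hg
    obtain ⟨c, hc⟩ := Ideal.mem_span_singleton'.mp (hsoc (ι' g) (hmem_max g hg))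
    obtain ⟨⟨d, t⟩, hd⟩ := IsLocalization.mk'_surjective m.primeCompl c
    dsimp only at hd
    have h1 : y * ι' ↑s0 = ι' y0 := by rw [← hy0]; exact IsLocalization.mk'_spec R y0 s0
    have h2 : c * ι' ↑t = ι' d := by rw [← hd]; exact IsLocalization.mk'_spec R d t
    have hX : ι' (g * y0 * ↑t) = ι' (a0 * d * ↑s0) := by
      simp only [map_mul]
      linear_combination (-(ι' g * ι' ↑t)) * h1 + (ι' a0 * ι' ↑s0) * h2 +
        (-(ι' ↑s0 * ι' ↑t)) * hc + (ι' ↑s0 * ι' ↑t * c) * hαdef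
    obtain ⟨u, hu⟩ := (IsLocalization.eq_iff_exists m.primeCompl R).mp hX
    refine ⟨↑u * ↑t, mul_mem u.2 t.2, u * (d * ↑s0), ?_⟩
    linear_combination hu
  -- one common denominator for all generators
  have hcommon : ∀ s' : Finset A, (∀ g ∈ s', g ∈ m) →
      ∃ U ∈ m.primeCompl, ∀ g ∈ s', ∃ e : A, U * (y0 * g) = a0 * e := by
    intro s'
    induction s' using Finset.induction_on with
    | empty => exact fun _ => ⟨1, one_mem _, by simp⟩
    | @insert g s' hgs ih =>
      intro hmem
      obtain ⟨U, hU, hUs⟩ := ih fun g hg => hmem g (Finset.mem_insert_of_mem hg)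
      obtain ⟨V, hV, e, hVe⟩ := hone g (hmem g (Finset.mem_insert_self g s'))
      refine ⟨V * U, mul_mem hV hU, fun g' hg' => ?_⟩
      rcases Finset.mem_insert.mp hg' with rfl | hg'
      · exact ⟨U * e, by linear_combination U * hVe⟩
      · obtain ⟨e', he'⟩ := hUs g' hg'
        exact ⟨V * e', by linear_combination V * he'⟩
  obtain ⟨s, hs⟩ : m.FG := IsNoetherian.noetherian m
  obtain ⟨U, hUmem, hU⟩ := hcommon s (fun g hg => hs ▸ Ideal.subset_span hg)
  set x : K := IsLocalization.mk' K (U * y0) (⟨a0, ha0⟩ : nonZeroDivisors A) with hx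
  have hua0 : IsUnit (ι a0) := IsLocalization.map_units K (⟨a0, ha0⟩ : nonZeroDivisors A)
  have hxa0 : x * ι a0 = ι (U * y0) := IsLocalization.mk'_spec K (U * y0) _
  refine ⟨x, ?_, ?_⟩
  · -- x ∉ 1
    intro hx1
    rw [Submodule.one_eq_range] at hx1
    obtain ⟨w, hw⟩ := hx1
    have hw' : ι w = x := hw
    have heq : U * y0 = w * a0 := by
      apply IsFractionRing.injective A K
      rw [← hxa0, map_mul, ← hw']
    -- derive y ∈ span {α}
    have u2 : IsUnit (ι' (U * ↑s0)) :=
      IsLocalization.map_units R (⟨U, hUmem⟩ * s0)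
    have h3 : ι' (U * ↑s0) * y = ι' w * α := by
      have h1 : y * ι' ↑s0 = ι' y0 := by rw [← hy0]; exact IsLocalization.mk'_spec R y0 s0
      rw [map_mul]
      calc ι' U * ι' ↑s0 * y = ι' U * (y * ι' ↑s0) := by ring
        _ = ι' U * ι' y0 := by rw [h1]
        _ = ι' (U * y0) := by rw [map_mul]
        _ = ι' (w * a0) := by rw [heq]
        _ = ι' w * α := by rw [map_mul, hαdef]
    apply hy
    refine Ideal.mem_span_singleton'.mpr ⟨↑u2.unit⁻¹ * ι' w, ?_⟩
    calc ↑u2.unit⁻¹ * ι' w * α = ↑u2.unit⁻¹ * (ι' w * α) := by ring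
      _ = ↑u2.unit⁻¹ * (ι' (U * ↑s0) * y) := by rw [h3]
      _ = ↑u2.unit⁻¹ * (↑u2.unit * y) := by rw [IsUnit.unit_spec]
      _ = y := by rw [← mul_assoc, Units.inv_mul, one_mul]
  · -- ∀ c ∈ m, x * ι c ∈ 1
    intro c hc
    have hL : m ≤ Submodule.comap ((LinearMap.mul A K x).comp (Algebra.linearMap A K))
        (1 : Submodule A K) := by
      rw [← hs, Ideal.span_le]
      intro g hg
      obtain ⟨e, he⟩ := hU g hg
      have hxg : x * ι g = ι e := by
        apply hua0.mul_left_cancel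
        calc ι a0 * (x * ι g) = (x * ι a0) * ι g := by ring
          _ = ι (U * y0) * ι g := by rw [hxa0]
          _ = ι (U * (y0 * g)) := by rw [← map_mul]; ring_nf
          _ = ι (a0 * e) := by rw [he]
          _ = ι a0 * ι e := by rw [map_mul]
      simp only [SetLike.mem_coe, Submodule.mem_comap, LinearMap.coe_comp, Function.comp_apply,
        Algebra.linearMap_apply, LinearMap.mul_apply']
      rw [hxg]
      exact Submodule.algebraMap_mem e
    have := hL hc
    simpa using this

lemma div_div_of_reflexive (A : Type u) [CommRing A] (I : Ideal A)
    (hrefl : Module.IsReflexive A I) (a0 : A) (ha0I : a0 ∈ I) (ha0 : a0 ∈ nonZeroDivisors A) :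
    (1 : Submodule A (FractionRing A)) / ((1 : Submodule A (FractionRing A)) / I.toFrac)
      = I.toFrac := by
  classical
  set K := FractionRing A with hK
  have hinj : Function.Injective (algebraMap A K) := IsFractionRing.injective A K
  have hua0 : IsUnit (algebraMap A K a0) :=
    IsLocalization.map_units K (⟨a0, ha0⟩ : nonZeroDivisors A)
  set t : K := ↑hua0.unit⁻¹ with ht
  have hta0 : algebraMap A K a0 * t = 1 := by
    rw [ht]
    nth_rewrite 1 [← hua0.unit_spec]
    exact Units.mul_inv _
  set Z : Module.Dual A ↥I →ₗ[A] K :=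
    { toFun := fun f => algebraMap A K (f ⟨a0, ha0I⟩) * t
      map_add' := by intro f g; simp [add_mul]
      map_smul' := by
        intro c f
        simp only [LinearMap.smul_apply, smul_eq_mul, map_mul, RingHom.id_apply,
          Algebra.smul_def]
        ring } with hZdef
  have hZsp : ∀ (f : Module.Dual A ↥I) (b : A) (hb : b ∈ I),
      Z f * algebraMap A K b = algebraMap A K (f ⟨b, hb⟩) := by
    intro f b hb
    have key : b * (f ⟨a0, ha0I⟩) = a0 * (f ⟨b, hb⟩) := by
      have h1 : b • (⟨a0, ha0I⟩ : ↥I) = a0 • (⟨b, hb⟩ : ↥I) := by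
        ext
        simp only [SetLike.val_smul, smul_eq_mul]
        ring
      calc b * f ⟨a0, ha0I⟩ = b • f ⟨a0, ha0I⟩ := rfl
        _ = f (b • ⟨a0, ha0I⟩) := (f.map_smul b _).symm
        _ = f (a0 • ⟨b, hb⟩) := by rw [h1]
        _ = a0 • f ⟨b, hb⟩ := f.map_smul a0 _
        _ = a0 * f ⟨b, hb⟩ := rfl
    apply hua0.mul_left_cancel
    calc algebraMap A K a0 * (Z f * algebraMap A K b)
          = (algebraMap A K a0 * t) * (algebraMap A K (f ⟨a0, ha0I⟩) * algebraMap A K b) := by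
            rw [hZdef]; dsimp; ring
      _ = algebraMap A K (f ⟨a0, ha0I⟩) * algebraMap A K b := by rw [hta0, one_mul]
      _ = algebraMap A K (b * f ⟨a0, ha0I⟩) := by rw [map_mul]; ring
      _ = algebraMap A K (a0 * f ⟨b, hb⟩) := by rw [key]
      _ = algebraMap A K a0 * algebraMap A K (f ⟨b, hb⟩) := by rw [map_mul]
  apply le_antisymm
  · intro x hx
    haveI := hrefl
    have hZmem : ∀ f : Module.Dual A ↥I, Z f ∈ (1 : Submodule A K) / I.toFrac := by
      intro f
      rw [Submodule.mem_div_iff_forall_mul_mem]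
      rintro y ⟨b, hb, rfl⟩
      rw [Algebra.linearMap_apply, hZsp f b hb]
      exact Submodule.algebraMap_mem _
    have hGmem : ∀ f : Module.Dual A ↥I,
        ((LinearMap.mul A K) x ∘ₗ Z) f ∈ LinearMap.range (Algebra.linearMap A K) := by
      intro f
      rw [← Submodule.one_eq_range]
      exact Submodule.mem_div_iff_forall_mul_mem.mp hx _ (hZmem f)
    set e : A ≃ₗ[A] LinearMap.range (Algebra.linearMap A K) :=
      LinearEquiv.ofInjective (Algebra.linearMap A K) hinj with he
    set G : Module.Dual A (Module.Dual A ↥I) :=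
      e.symm.toLinearMap ∘ₗ LinearMap.codRestrict (LinearMap.range (Algebra.linearMap A K))
        ((LinearMap.mul A K) x ∘ₗ Z) hGmem with hG
    obtain ⟨b, hb⟩ := (Module.bijective_dual_eval A ↥I).2 G
    have hb2 := DFunLike.congr_fun hb I.subtype
    rw [Module.Dual.eval_apply] at hb2
    -- hb2 : I.subtype b = G I.subtype
    have hZsub : Z I.subtype = 1 := by
      rw [hZdef]; dsimp
      exact hta0
    have h3 : ((e (↑b : A) : LinearMap.range (Algebra.linearMap A K)) : K) = x := by
      rw [show ((b : A)) = G I.subtype from hb2, hG]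
      simp only [LinearMap.coe_comp, Function.comp_apply, LinearEquiv.coe_coe]
      rw [e.apply_symm_apply]
      simp only [LinearMap.codRestrict_apply, LinearMap.coe_comp, Function.comp_apply,
        LinearMap.mul_apply']
      rw [hZsub, mul_one]
    have hxval : x = algebraMap A K ↑b := by
      rw [← h3, he]; rfl
    rw [hxval]
    exact ⟨↑b, b.2, rfl⟩
  · rintro y ⟨b, hb, rfl⟩
    rw [Submodule.mem_div_iff_forall_mul_mem]
    intro z hz
    rw [mul_comm]
    exact Submodule.mem_div_iff_forall_mul_mem.mp hz _ ⟨b, hb, rfl⟩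

/-- over a commutative Noetherian semi-local ring `A` with
`depth(A_m) ≤ 1` for all maximal ideals `m`, any reflexive ideal `I` containing a
nonzerodivisor with `(I : I) = A` is free: `I ≅ A`. -/
theorem reflexive_regular_colon_self_isoSelf (A : Type u) [CommRing A] [IsNoetherianRing A]
    (hsemi : {m : Ideal A | m.IsMaximal}.Finite)
    (hdepth : ∀ (m : Ideal A) [m.IsMaximal],
      (IsLocalRing.maximalIdeal (Localization.AtPrime m)).grade ≤ 1)
    (I : Ideal A) (hrefl : Module.IsReflexive A I)
    (hreg : ∃ a ∈ I, a ∈ nonZeroDivisors A)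
    (hII : I.toFrac / I.toFrac = 1) :
    Nonempty (↥I ≃ₗ[A] A) := by
  classical
  obtain ⟨a0, ha0I, ha0⟩ := hreg
  set K := FractionRing A with hK
  have hinj : Function.Injective (algebraMap A K) := IsFractionRing.injective A K
  set 𝕀 := I.toFrac with h𝕀
  set 𝕁 := (1 : Submodule A K) / 𝕀 with h𝕁
  have hmem𝕀 : ∀ b ∈ I, algebraMap A K b ∈ 𝕀 := by
    intro b hb
    exact ⟨b, hb, rfl⟩
  have hone𝕁 : (1 : K) ∈ 𝕁 := by
    rw [h𝕁, Submodule.mem_div_iff_forall_mul_mem]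
    rintro y ⟨b, hb, rfl⟩
    rw [one_mul, Algebra.linearMap_apply]
    exact Submodule.algebraMap_mem b
  have hrefl2 : (1 : Submodule A K) / 𝕁 = 𝕀 := div_div_of_reflexive A I hrefl a0 ha0I ha0
  have hprod1 : ∀ (b : A), b ∈ I → ∀ z ∈ 𝕁, algebraMap A K b * z ∈ (1 : Submodule A K) := by
    intro b hb z hz
    rw [mul_comm]
    exact Submodule.mem_div_iff_forall_mul_mem.mp hz _ (hmem𝕀 b hb)
  -- the partial inverse of algebraMap
  set pull : K → A := fun k => if h : ∃ w : A, algebraMap A K w = k then h.choose else 0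
    with hpulldef
  have hpull : ∀ (k : K), k ∈ (1 : Submodule A K) → algebraMap A K (pull k) = k := by
    intro k hk
    rw [Submodule.one_eq_range] at hk
    obtain ⟨w, hw⟩ := hk
    have hex : ∃ w : A, algebraMap A K w = k := ⟨w, hw⟩
    rw [hpulldef]
    dsimp only
    rw [dif_pos hex]
    exact hex.choose_spec
  by_cases hT : algebraMap A K (1 : A) ∈ 𝕀 * 𝕁
  · -- I is invertible; construct a generator
    have hrep : ∃ l : List (A × K), (∀ p ∈ l, p.1 ∈ I ∧ p.2 ∈ 𝕁) ∧
        algebraMap A K (1 : A) = (l.map fun p => algebraMap A K p.1 * p.2).sum := by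
      refine Submodule.mul_induction_on hT ?_ ?_
      · rintro w ⟨b, hb, rfl⟩ z hz
        refine ⟨[(b, z)], ?_, by simp; rfl⟩
        intro p hp
        rw [List.mem_singleton] at hp
        subst hp
        exact ⟨hb, hz⟩
      · rintro w1 w2 ⟨l1, hl1, he1⟩ ⟨l2, hl2, he2⟩
        exact ⟨l1 ++ l2, fun p hp => (List.mem_append.mp hp).elim (hl1 p) (hl2 p),
          by rw [List.map_append, List.sum_append, ← he1, ← he2]⟩
    obtain ⟨l, hl, hsum⟩ := hrep
    have hsumA : (l.map fun p => pull (algebraMap A K p.1 * p.2)).sum = 1 := by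
      apply hinj
      rw [map_list_sum, List.map_map, map_one]
      have hmc : List.map (⇑(algebraMap A K) ∘ fun p => pull (algebraMap A K p.1 * p.2)) l
          = List.map (fun p => algebraMap A K p.1 * p.2) l :=
        List.map_congr_left fun p hp => hpull _ (hprod1 p.1 (hl p hp).1 p.2 (hl p hp).2)
      rw [hmc, ← hsum, map_one]
    have hchoice : ∀ m : Ideal A, m.IsMaximal → ∃ p : A × K, p ∈ l ∧
        pull (algebraMap A K p.1 * p.2) ∉ m := by
      intro m hmax
      by_contra h
      push_neg at h
      have h1m : (1 : A) ∈ m := by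
        rw [← hsumA]
        refine list_sum_mem ?_
        intro xx hxx
        rw [List.mem_map] at hxx
        obtain ⟨p, hp, rfl⟩ := hxx
        exact h p hp
      exact hmax.ne_top (Ideal.eq_top_iff_one m |>.mpr h1m)
    set S := hsemi.toFinset with hS
    have hSmem : ∀ m : Ideal A, m ∈ S ↔ m.IsMaximal := by
      intro m; rw [hS, Set.Finite.mem_toFinset]; rfl
    -- choose the data for each maximal ideal
    set pk : Ideal A → A × K := fun m =>
      if h : m.IsMaximal then (hchoice m h).choose else (0, 0) with hpk
    have hpk_spec : ∀ m : Ideal A, m.IsMaximal →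
        (pk m).1 ∈ I ∧ (pk m).2 ∈ 𝕁 ∧ pull (algebraMap A K (pk m).1 * (pk m).2) ∉ m := by
      intro m h
      have h1 : pk m = (hchoice m h).choose := by rw [hpk]; dsimp only; rw [dif_pos h]
      obtain ⟨hmem, hnot⟩ := (hchoice m h).choose_spec
      rw [h1]
      exact ⟨(hl _ hmem).1, (hl _ hmem).2, hnot⟩
    set d : Ideal A → A → A := fun m g => pull (algebraMap A K g * (pk m).2) with hd
    set c : Ideal A → A := fun m => d m (pk m).1 with hc
    have hcnot : ∀ m : Ideal A, m.IsMaximal → c m ∉ m := fun m h => (hpk_spec m h).2.2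
    have hd_spec : ∀ m : Ideal A, m.IsMaximal → ∀ g ∈ I,
        algebraMap A K (d m g) = algebraMap A K g * (pk m).2 := by
      intro m hm g hg
      exact hpull _ (hprod1 g hg _ (hpk_spec m hm).2.1)
    have hc_key : ∀ m : Ideal A, m.IsMaximal → ∀ g ∈ I, c m * g = (pk m).1 * d m g := by
      intro m hm g hg
      apply hinj
      rw [map_mul, map_mul, hd_spec m hm g hg, hc]
      dsimp only
      rw [hd_spec m hm _ (hpk_spec m hm).1]
      ring
    -- CRT elements
    have hCRT : ∀ m ∈ S, ∃ e : A, (1 - e) ∈ m ∧ ∀ m' ∈ S, m' ≠ m → e ∈ m' := by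
      intro m hmS
      have hmax : m.IsMaximal := (hSmem m).mp hmS
      haveI := hmax
      have hpick : ∀ m' ∈ S.erase m, ∃ xx, xx ∈ m' ∧ xx ∉ m := by
        intro m' hm'
        have hne : m' ≠ m := (Finset.mem_erase.mp hm').1
        have hmax' : m'.IsMaximal := (hSmem m').mp (Finset.mem_erase.mp hm').2
        by_contra h
        push_neg at h
        exact hne (hmax'.eq_of_le hmax.ne_top h)
      choose xx hxx1 hxx2 using hpick
      set f := ∏ p ∈ (S.erase m).attach, xx p.1 p.2 with hf
      have hfm : f ∉ m := by
        haveI hpr := hmax.isPrime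
        rw [hf]
        refine Finset.prod_induction _ (· ∉ m) ?_ ?_ ?_
        · intro u v hu hv huv
          rcases hpr.mem_or_mem huv with h | h
          exacts [hu h, hv h]
        · intro h1
          exact hmax.ne_top ((Ideal.eq_top_iff_one m).mpr h1)
        · intro p _
          exact hxx2 p.1 p.2
      have hfmem : ∀ m' ∈ S.erase m, f ∈ m' := by
        intro m' hm'
        have hdvd : xx m' hm' ∣ f :=
          Finset.dvd_prod_of_mem (fun p => xx p.1 p.2) (Finset.mem_attach _ ⟨m', hm'⟩)
        obtain ⟨k, hk⟩ := hdvd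
        rw [hk]
        exact Ideal.mul_mem_right _ _ (hxx1 m' hm')
      obtain ⟨r, i, hi, hri⟩ := hmax.exists_inv hfm
      refine ⟨r * f, ?_, ?_⟩
      · have : (1 : A) - r * f = i := by linear_combination - hri
        rw [this]
        exact hi
      · intro m' hm' hne
        exact Ideal.mul_mem_left _ r (hfmem m' (Finset.mem_erase.mpr ⟨hne, hm'⟩))
    choose ee hee1 hee2 using hCRT
    -- the generator
    set a : A := ∑ p ∈ S.attach, ee p.1 p.2 * (pk p.1).1 with ha
    have haI : a ∈ I := by
      rw [ha]
      refine Submodule.sum_mem _ ?_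
      intro p _
      exact Ideal.mul_mem_left _ _ (hpk_spec p.1 ((hSmem p.1).mp p.2)).1
    -- local units
    have hlocal : ∀ m : Ideal A, m.IsMaximal → ∃ v : A, v ∉ m ∧ v ∈ (Ideal.span {a}).colon I := by
      intro m hmax
      have hmS : m ∈ S := (hSmem m).mpr hmax
      set w : A := ∑ p ∈ S.attach, ee p.1 p.2 * d m (pk p.1).1 with hw
      have hca : c m * a = (pk m).1 * w := by
        rw [ha, hw, Finset.mul_sum, Finset.mul_sum]
        refine Finset.sum_congr rfl ?_
        intro p _
        have := hc_key m hmax (pk p.1).1 (hpk_spec p.1 ((hSmem p.1).mp p.2)).1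
        linear_combination ee p.1 p.2 * this
      have hwm : w ∉ m := by
        have hdiff : w - c m ∈ m := by
          have hsplit : w = ee m hmS * d m (pk m).1 +
              ∑ p ∈ S.attach.erase ⟨m, hmS⟩, ee p.1 p.2 * d m (pk p.1).1 := by
            rw [hw]
            rw [← Finset.add_sum_erase _ _ (Finset.mem_attach _ ⟨m, hmS⟩)]
          have hterm : ∀ p ∈ S.attach.erase ⟨m, hmS⟩, ee p.1 p.2 * d m (pk p.1).1 ∈ m := by
            intro p hp
            have hne : m ≠ p.1 := by
              intro h
              exact (Finset.mem_erase.mp hp).1 (Subtype.ext h.symm)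
            exact Ideal.mul_mem_right _ _ (hee2 p.1 p.2 m hmS hne)
          have hsum2 : ∑ p ∈ S.attach.erase ⟨m, hmS⟩, ee p.1 p.2 * d m (pk p.1).1 ∈ m :=
            Submodule.sum_mem _ hterm
          have h1e : (1 - ee m hmS) * c m ∈ m := Ideal.mul_mem_right _ _ (hee1 m hmS)
          have : w - c m = (∑ p ∈ S.attach.erase ⟨m, hmS⟩, ee p.1 p.2 * d m (pk p.1).1)
              - (1 - ee m hmS) * c m := by
            rw [hsplit, hc]
            ring
          rw [this]
          exact Submodule.sub_mem _ hsum2 h1e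
        intro hwmem
        apply hcnot m hmax
        have : c m = w - (w - c m) := by ring
        rw [this]
        exact Submodule.sub_mem _ hwmem hdiff
      refine ⟨c m * w, ?_, ?_⟩
      · intro hmem
        haveI hpr := hmax.isPrime
        rcases hpr.mem_or_mem hmem with h | h
        exacts [hcnot m hmax h, hwm h]
      · rw [Submodule.mem_colon]
        intro g hg
        rw [smul_eq_mul]
        refine Ideal.mem_span_singleton'.mpr ⟨c m * d m g, ?_⟩
        have h1 := hc_key m hmax g hg
        linear_combination (d m g) * hca - w * h1
    have hCtop : (Ideal.span {a}).colon I = ⊤ := by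
      by_contra h
      obtain ⟨m, hmax, hCm⟩ := Ideal.exists_le_maximal _ h
      obtain ⟨v, hvm, hvC⟩ := hlocal m hmax
      exact hvm (hCm hvC)
    have hspan : I = Ideal.span {a} := by
      apply le_antisymm
      · intro g hg
        have h1 : (1 : A) ∈ (Ideal.span {a}).colon I := hCtop ▸ trivial
        have := Submodule.mem_colon.mp h1 g hg
        rwa [one_smul] at this
      · rw [Ideal.span_le, Set.singleton_subset_iff]
        exact haI
    have hareg : a ∈ nonZeroDivisors A := by
      have ha0span : a0 ∈ Ideal.span {a} := hspan ▸ ha0I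
      obtain ⟨c0, hc0⟩ := Ideal.mem_span_singleton.mp ha0span
      rw [mem_nonZeroDivisors_iff_right]
      intro z hz
      apply (mem_nonZeroDivisors_iff_right.mp ha0) z
      rw [hc0]
      linear_combination c0 * hz
    -- build the equivalence
    set F : A →ₗ[A] ↥I := LinearMap.toSpanSingleton A ↥I ⟨a, haI⟩ with hF
    have hFbij : Function.Bijective F := by
      constructor
      · intro r r' hrr
        have h1 : r * a = r' * a := by
          have h2 := congrArg (Subtype.val) hrr
          simpa [hF, LinearMap.toSpanSingleton_apply, smul_eq_mul] using h2
        have h2 : (r - r') * a = 0 := by linear_combination h1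
        exact sub_eq_zero.mp ((mem_nonZeroDivisors_iff_right.mp hareg) _ h2)
      · rintro ⟨g, hg⟩
        have hgs : g ∈ Ideal.span {a} := hspan ▸ hg
        obtain ⟨cc, hcc⟩ := Ideal.mem_span_singleton'.mp hgs
        refine ⟨cc, ?_⟩
        apply Subtype.ext
        rw [hF]
        simp only [LinearMap.toSpanSingleton_apply, SetLike.val_smul, smul_eq_mul]
        exact hcc
    exact ⟨(LinearEquiv.ofBijective F hFbij).symm⟩
  · -- contradiction via the depth condition
    exfalso
    set J : Ideal A := Submodule.comap (Algebra.linearMap A K) (𝕀 * 𝕁) with hJ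
    have hJtop : J ≠ ⊤ := by
      intro h
      apply hT
      have h1 : (1:A) ∈ J := h ▸ trivial
      rw [hJ, Submodule.mem_comap, Algebra.linearMap_apply] at h1
      exact h1
    obtain ⟨m, hmmax, hJm⟩ := Ideal.exists_le_maximal J hJtop
    have ha0J : a0 ∈ J := by
      have h1 : algebraMap A K a0 * 1 ∈ 𝕀 * 𝕁 := Submodule.mul_mem_mul (hmem𝕀 a0 ha0I) hone𝕁
      rw [mul_one] at h1
      rw [hJ, Submodule.mem_comap, Algebra.linearMap_apply]
      exact h1
    haveI := hmmax
    obtain ⟨x, hx1, hxm⟩ := frac_socle_exists A m (hdepth m) a0 (hJm ha0J) ha0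
    have hxz : ∀ z ∈ 𝕁, x * z ∈ 𝕁 := by
      intro z hz
      rw [h𝕁, Submodule.mem_div_iff_forall_mul_mem]
      intro w hw
      have hzw : z * w ∈ 𝕀 * 𝕁 := by
        have h5 := Submodule.mul_mem_mul hw hz
        rwa [mul_comm w z] at h5
      have hzw1 : z * w ∈ (1 : Submodule A K) :=
        Submodule.mem_div_iff_forall_mul_mem.mp hz w hw
      have hcJ : pull (z * w) ∈ J := by
        rw [hJ, Submodule.mem_comap, Algebra.linearMap_apply, hpull _ hzw1]
        exact hzw
      have : x * z * w = x * algebraMap A K (pull (z * w)) := by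
        rw [hpull _ hzw1, mul_assoc]
      rw [this]
      exact hxm _ (hJm hcJ)
    have hx𝕀 : x ∈ 𝕀 / 𝕀 := by
      rw [Submodule.mem_div_iff_forall_mul_mem]
      intro w hw
      rw [← hrefl2, Submodule.mem_div_iff_forall_mul_mem]
      intro z hz
      have : x * w * z = (x * z) * w := by ring
      rw [this]
      exact Submodule.mem_div_iff_forall_mul_mem.mp (hxz z hz) w hw
    rw [hII] at hx𝕀
    exact hx1 hx𝕀
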